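/- The set A := (⋃_{v ∈ ℚ×ℚ} S(v,1))ᶜ, where S(v,1) = {x ∈ ℝ² : |x - v| = 1}, satisfies (A + S¹) ∩ (ℚ × ℚ) = ∅; consequently A + S¹ has empty interior. -/

import Mathlib

open Pointwise

theorem stmt_2
    (Q2 : Set (EuclideanSpace ℝ (Fin 2)))
    (hQ2 : Q2 = {p : EuclideanSpace ℝ (Fin 2) |
      (∃ q : ℚ, p 0 = (q : ℝ)) ∧ ∃ q : ℚ, p 1 = (q : ℝ)})
    (A : Set (EuclideanSpace ℝ (Fin 2)))
    (hA : A = (⋃ v ∈ Q2, Metric.sphere v 1)ᶜ) :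
    (A + Metric.sphere (0 : EuclideanSpace ℝ (Fin 2)) 1) ∩ Q2 = ∅ ∧
    interior (A + Metric.sphere (0 : EuclideanSpace ℝ (Fin 2)) 1) = ∅ := by
  have hempty : (A + Metric.sphere (0 : EuclideanSpace ℝ (Fin 2)) 1) ∩ Q2 = ∅ := by
    ext x
    simp only [Set.mem_inter_iff, Set.mem_empty_iff_false, iff_false, not_and]
    rintro ⟨a, ha, s, hs, rfl⟩ hxQ
    rw [hA] at ha
    apply ha
    refine Set.mem_iUnion₂.2 ⟨a + s, hxQ, ?_⟩
    simp only [Metric.mem_sphere, dist_eq_norm]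
    simpa using hs
  refine ⟨hempty, ?_⟩
  have hdense : Dense Q2 := by
    rw [Metric.dense_iff]
    intro x r hr
    obtain ⟨q0, hq0⟩ := exists_rat_near (x 0) (by positivity : (0:ℝ) < r/2)
    obtain ⟨q1, hq1⟩ := exists_rat_near (x 1) (by positivity : (0:ℝ) < r/2)
    refine ⟨!₂[(q0:ℝ), (q1:ℝ)], ?_, ?_⟩
    · rw [Metric.mem_ball]
      rw [EuclideanSpace.dist_eq]
      have : Real.sqrt (∑ i : Fin 2, dist ((!₂[(q0:ℝ), (q1:ℝ)] : EuclideanSpace ℝ (Fin 2)) i) (x i) ^ 2) < r := by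
        have h2 : (∑ i : Fin 2, dist ((!₂[(q0:ℝ), (q1:ℝ)] : EuclideanSpace ℝ (Fin 2)) i) (x i) ^ 2) < r ^ 2 := by
          rw [Fin.sum_univ_two]
          have e0 : dist ((!₂[(q0:ℝ), (q1:ℝ)] : EuclideanSpace ℝ (Fin 2)) 0) (x 0) = |(q0:ℝ) - x 0| := by
            simp [Real.dist_eq]
          have e1 : dist ((!₂[(q0:ℝ), (q1:ℝ)] : EuclideanSpace ℝ (Fin 2)) 1) (x 1) = |(q1:ℝ) - x 1| := by
            simp [Real.dist_eq]
          rw [e0, e1]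
          have a0 : |(q0:ℝ) - x 0| < r/2 := by rw [abs_sub_comm]; exact hq0
          have a1 : |(q1:ℝ) - x 1| < r/2 := by rw [abs_sub_comm]; exact hq1
          nlinarith [abs_nonneg ((q0:ℝ) - x 0), abs_nonneg ((q1:ℝ) - x 1)]
        calc Real.sqrt (∑ i : Fin 2, dist ((!₂[(q0:ℝ), (q1:ℝ)] : EuclideanSpace ℝ (Fin 2)) i) (x i) ^ 2)
            < Real.sqrt (r ^ 2) := by
              apply Real.sqrt_lt_sqrt _ h2
              positivity
          _ = r := by rw [Real.sqrt_sq hr.le]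
      exact this
    · rw [hQ2]
      exact ⟨⟨q0, by simp⟩, ⟨q1, by simp⟩⟩
  by_contra hne
  obtain ⟨x, hx⟩ := Set.nonempty_iff_ne_empty.2 hne
  obtain ⟨y, hy, hyQ⟩ := hdense.exists_mem_open isOpen_interior ⟨x, hx⟩
  have : y ∈ (A + Metric.sphere (0 : EuclideanSpace ℝ (Fin 2)) 1) ∩ Q2 :=
    ⟨interior_subset hyQ, hy⟩
  rw [hempty] at this
  exact this
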